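/- Let A be an n-by-n real skew-symmetric matrix. Then all Pfaffians of even-sized principal submatrices of A are positive if and only if all determinants of odd-sized top-right almost-principal submatrices of A are positive. (A top-right almost-principal submatrix is A[I∪{i}, I∪{j}] with i<j and i,j ∉ I.) -/

import Mathlib

/-- The Pfaffian of the principal submatrix of `A` on index set `I`,
defined by the recursive expansion along the row of the smallest index;
the Pfaffian of the empty matrix is `1`. -/
noncomputable def pf {K : Type*} [Field K] {n : ℕ} (A : Matrix (Fin n) (Fin n) K)
    (I : Finset (Fin n)) : K :=
  if h : I.Nonempty then
    ∑ j ∈ (I.erase (I.min' h)).attach,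
      (-1 : K) ^ ((I.erase (I.min' h)).filter (fun a => a < j.1)).card
        * A (I.min' h) j.1 * pf A ((I.erase (I.min' h)).erase j.1)
  else 1
termination_by I.card
decreasing_by
  exact lt_of_le_of_lt (Finset.card_le_card (Finset.erase_subset _ _))
    (Finset.card_erase_lt_of_mem (I.min'_mem h))

namespace PfAux

variable {n : ℕ}

/-- indicator of `x < y` -/
def q (x y : Fin n) : ℕ := if x < y then 1 else 0

lemma q_total {x y : Fin n} (h : x ≠ y) : q x y + q y x = 1 := by
  rcases lt_or_gt_of_ne h with h' | h' <;> simp [q, h', asymm h']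

lemma q_le_one (x y : Fin n) : q x y ≤ 1 := by unfold q; split <;> omega

/-- number of elements of `S` smaller than `x` -/
def cnt (S : Finset (Fin n)) (x : Fin n) : ℕ := (S.filter (· < x)).card

lemma cnt_erase (S : Finset (Fin n)) {x : Fin n} (y : Fin n) (hx : x ∈ S) :
    cnt (S.erase x) y + q x y = cnt S y := by
  unfold cnt q
  rw [Finset.filter_erase]
  by_cases h : x < y
  · rw [if_pos h, Finset.card_erase_of_mem (by simp [hx, h])]
    have : 0 < ((S.filter (· < y))).card := Finset.card_pos.2 ⟨x, by simp [hx, h]⟩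
    omega
  · rw [if_neg h, Finset.erase_eq_of_notMem (by simp [h])]
    omega

lemma cnt_min (S : Finset (Fin n)) (h : S.Nonempty) : cnt S (S.min' h) = 0 := by
  unfold cnt
  rw [Finset.card_eq_zero, Finset.filter_eq_empty_iff]
  intro a ha
  exact not_lt.2 (S.min'_le a ha)

lemma neg_one_pow_congr {K : Type*} [Monoid K] [HasDistribNeg K] {a b : ℕ}
    (h : a % 2 = b % 2) : (-1 : K) ^ a = (-1) ^ b := by
  conv_lhs => rw [← Nat.div_add_mod a 2]
  conv_rhs => rw [← Nat.div_add_mod b 2]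
  rw [pow_add, pow_add, pow_mul, pow_mul, h]
  simp

lemma neg_one_pow_anticongr {K : Type*} [Monoid K] [HasDistribNeg K] {a b : ℕ}
    (h : a % 2 ≠ b % 2) : (-1 : K) ^ a = -(-1) ^ b := by
  have : a % 2 = (b + 1) % 2 := by omega
  rw [neg_one_pow_congr this, pow_succ]
  simp

variable (K : Type*) [Field K]

/-- the sign in the Pfaffian expansion of `S` along row `a`, column `b`. -/
def sg (S : Finset (Fin n)) (a b : Fin n) : K :=
  (-1 : K) ^ (cnt S a + cnt S b + 1 + q b a)

variable {K}

lemma pf_empty {A : Matrix (Fin n) (Fin n) K} : pf A (∅ : Finset (Fin n)) = 1 := by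
  rw [pf]; simp

lemma pf_expand (A : Matrix (Fin n) (Fin n) K) {I : Finset (Fin n)} (h : I.Nonempty) :
    pf A I = ∑ j ∈ I.erase (I.min' h),
      (-1 : K) ^ (cnt (I.erase (I.min' h)) j) * A (I.min' h) j
        * pf A ((I.erase (I.min' h)).erase j) := by
  rw [pf, dif_pos h]
  unfold cnt
  exact Finset.sum_attach (I.erase (I.min' h))
    (fun x => (-1 : K) ^ (((I.erase (I.min' h)).filter (fun a => a < x)).card)
      * A (I.min' h) x * pf A ((I.erase (I.min' h)).erase x))

lemma pf_odd {A : Matrix (Fin n) (Fin n) K} :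
    ∀ (N : ℕ) (I : Finset (Fin n)), I.card ≤ N → Odd I.card → pf A I = 0 := by
  intro N
  induction N with
  | zero => intro I h1 h2; rcases h2 with ⟨k, hk⟩; omega
  | succ N ih =>
      intro I h1 h2
      have hne : I.Nonempty := by
        rw [← Finset.card_pos]; rcases h2 with ⟨k, hk⟩; omega
      rw [pf_expand A hne]
      apply Finset.sum_eq_zero
      intro j hj
      have hm : I.min' hne ∈ I := I.min'_mem hne
      have hjI : j ∈ I.erase (I.min' hne) := hj
      have hc1 : (I.erase (I.min' hne)).card = I.card - 1 :=
        Finset.card_erase_of_mem hm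
      have hc2 : ((I.erase (I.min' hne)).erase j).card = I.card - 2 := by
        rw [Finset.card_erase_of_mem hjI, hc1]; omega
      have hcard2 : 2 ≤ I.card := by
        have : 0 < (I.erase (I.min' hne)).card := Finset.card_pos.2 ⟨j, hj⟩
        omega
      rw [ih _ (by omega) (by rw [hc2]; rcases h2 with ⟨k, hk⟩; exact ⟨k - 1, by omega⟩),
        mul_zero]

lemma pf_congr {A B : Matrix (Fin n) (Fin n) K} :
    ∀ (N : ℕ) (I : Finset (Fin n)), I.card ≤ N →
      (∀ p ∈ I, ∀ q ∈ I, A p q = B p q) → pf A I = pf B I := by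
  intro N
  induction N with
  | zero =>
      intro I h1 _
      have : I = ∅ := Finset.card_eq_zero.1 (by omega)
      subst this; rw [pf_empty, pf_empty]
  | succ N ih =>
      intro I h1 hagree
      by_cases hne : I.Nonempty
      · rw [pf_expand A hne, pf_expand B hne]
        apply Finset.sum_congr rfl
        intro j hj
        have hm : I.min' hne ∈ I := I.min'_mem hne
        have hjI : j ∈ I := Finset.mem_of_mem_erase hj
        rw [hagree _ hm _ hjI]
        congr 1
        apply ih
        · have := Finset.card_erase_of_mem hm
          have := Finset.card_le_card
            (Finset.erase_subset j (I.erase (I.min' hne)))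
          omega
        · intro p hp qq hq
          exact hagree _ (Finset.mem_of_mem_erase (Finset.mem_of_mem_erase hp)) _
            (Finset.mem_of_mem_erase (Finset.mem_of_mem_erase hq))
      · rw [Finset.not_nonempty_iff_eq_empty.1 hne, pf_empty, pf_empty]

lemma pf_map {L : Type*} [Field L] (f : K →+* L) {A : Matrix (Fin n) (Fin n) K} :
    ∀ (N : ℕ) (I : Finset (Fin n)), I.card ≤ N → pf (A.map f) I = f (pf A I) := by
  intro N
  induction N with
  | zero =>
      intro I h1
      have : I = ∅ := Finset.card_eq_zero.1 (by omega)
      subst this; rw [pf_empty, pf_empty, map_one]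
  | succ N ih =>
      intro I h1
      by_cases hne : I.Nonempty
      · rw [pf_expand (A.map f) hne, pf_expand A hne, map_sum]
        apply Finset.sum_congr rfl
        intro j hj
        have hm : I.min' hne ∈ I := I.min'_mem hne
        rw [map_mul, map_mul, map_pow, map_neg, map_one, Matrix.map_apply]
        congr 1
        apply ih
        have := Finset.card_erase_of_mem hm
        have := Finset.card_le_card (Finset.erase_subset j (I.erase (I.min' hne)))
        omega
      · rw [Finset.not_nonempty_iff_eq_empty.1 hne, pf_empty, pf_empty, map_one]

/-- commutative-ring version of `pf` -/
noncomputable def pfr {R : Type*} [CommRing R] {n : ℕ} (A : Matrix (Fin n) (Fin n) R)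
    (I : Finset (Fin n)) : R :=
  if h : I.Nonempty then
    ∑ j ∈ (I.erase (I.min' h)).attach,
      (-1 : R) ^ ((I.erase (I.min' h)).filter (fun a => a < j.1)).card
        * A (I.min' h) j.1 * pfr A ((I.erase (I.min' h)).erase j.1)
  else 1
termination_by I.card
decreasing_by
  exact lt_of_le_of_lt (Finset.card_le_card (Finset.erase_subset _ _))
    (Finset.card_erase_lt_of_mem (I.min'_mem h))


lemma pfr_empty {R : Type*} [CommRing R] {n : ℕ} {A : Matrix (Fin n) (Fin n) R} :
    pfr A (∅ : Finset (Fin n)) = 1 := by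
  rw [pfr]; simp

lemma pfr_expand {R : Type*} [CommRing R] {n : ℕ} (A : Matrix (Fin n) (Fin n) R)
    {I : Finset (Fin n)} (h : I.Nonempty) :
    pfr A I = ∑ j ∈ I.erase (I.min' h),
      (-1 : R) ^ (cnt (I.erase (I.min' h)) j) * A (I.min' h) j
        * pfr A ((I.erase (I.min' h)).erase j) := by
  rw [pfr, dif_pos h]
  unfold cnt
  exact Finset.sum_attach (I.erase (I.min' h))
    (fun x => (-1 : R) ^ (((I.erase (I.min' h)).filter (fun a => a < x)).card)
      * A (I.min' h) x * pfr A ((I.erase (I.min' h)).erase x))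

lemma pfr_eq_pf {K : Type*} [Field K] {n : ℕ} {A : Matrix (Fin n) (Fin n) K} :
    ∀ (N : ℕ) (I : Finset (Fin n)), I.card ≤ N → pfr A I = pf A I := by
  intro N
  induction N with
  | zero =>
      intro I h1
      have : I = ∅ := Finset.card_eq_zero.1 (by omega)
      subst this
      rw [pfr_empty, pf_empty]
  | succ N ih =>
      intro I h1
      by_cases hne : I.Nonempty
      · rw [pfr_expand A hne, pf_expand A hne]
        refine Finset.sum_congr rfl fun j hj => ?_
        congr 1
        apply ih
        have hm := Finset.card_erase_of_mem (I.min'_mem hne)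
        have := Finset.card_le_card (Finset.erase_subset j (I.erase (I.min' hne)))
        omega
      · rw [Finset.not_nonempty_iff_eq_empty.1 hne, pfr_empty, pf_empty]

lemma pfr_map {R S : Type*} [CommRing R] [CommRing S] {n : ℕ} (f : R →+* S)
    {A : Matrix (Fin n) (Fin n) R} :
    ∀ (N : ℕ) (I : Finset (Fin n)), I.card ≤ N → pfr (A.map f) I = f (pfr A I) := by
  intro N
  induction N with
  | zero =>
      intro I h1
      have : I = ∅ := Finset.card_eq_zero.1 (by omega)
      subst this
      rw [pfr_empty, pfr_empty, map_one]
  | succ N ih =>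
      intro I h1
      by_cases hne : I.Nonempty
      · rw [pfr_expand (A.map f) hne, pfr_expand A hne, map_sum]
        refine Finset.sum_congr rfl fun j hj => ?_
        rw [map_mul, map_mul, map_pow, map_neg, map_one, Matrix.map_apply]
        congr 1
        apply ih
        have := Finset.card_erase_of_mem (I.min'_mem hne)
        have := Finset.card_le_card (Finset.erase_subset j (I.erase (I.min' hne)))
        omega
      · rw [Finset.not_nonempty_iff_eq_empty.1 hne, pfr_empty, pfr_empty, map_one]



lemma sum_erase_swap {α M : Type*} [DecidableEq α] [AddCommMonoid M] (U : Finset α)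
    (f : α → α → M) :
    ∑ k ∈ U, ∑ l ∈ U.erase k, f k l = ∑ k ∈ U, ∑ l ∈ U.erase k, f l k := by
  have h : ∀ g : α → α → M, ∑ k ∈ U, ∑ l ∈ U.erase k, g k l
      = ∑ k ∈ U, ∑ l ∈ U, if l = k then 0 else g k l := by
    intro g
    refine Finset.sum_congr rfl fun k _ => ?_
    rw [← Finset.sum_erase U (f := fun l => if l = k then 0 else g k l) (a := k) (by simp)]
    refine Finset.sum_congr rfl fun l hl => ?_
    rw [if_neg (Finset.ne_of_mem_erase hl)]
  rw [h, h, Finset.sum_comm]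
  refine Finset.sum_congr rfl fun k _ => Finset.sum_congr rfl fun l _ => ?_
  rcases eq_or_ne l k with rfl | hlk
  · simp
  · rw [if_neg hlk, if_neg (Ne.symm hlk)]

lemma sg_flip {S : Finset (Fin n)} {a b : Fin n} (hab : a ≠ b) :
    sg K S b a = - sg K S a b := by
  unfold sg
  exact neg_one_pow_anticongr (by have := q_total hab; omega)

lemma sg_swap {S : Finset (Fin n)} {a b c d : Fin n}
    (ha : a ∈ S) (hb : b ∈ S) (hc : c ∈ S) (hd : d ∈ S)
    (hab : a ≠ b) (hac : a ≠ c) (had : a ≠ d) (hbc : b ≠ c) (hbd : b ≠ d) (hcd : c ≠ d) :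
    sg K S a b * sg K ((S.erase a).erase b) c d
      = sg K S c d * sg K ((S.erase c).erase d) a b := by
  have hbS : b ∈ S.erase a := Finset.mem_erase.2 ⟨hab.symm, hb⟩
  have hdS : d ∈ S.erase c := Finset.mem_erase.2 ⟨hcd.symm, hd⟩
  have e1 : cnt ((S.erase a).erase b) c + q b c = cnt (S.erase a) c := cnt_erase _ c hbS
  have e2 : cnt (S.erase a) c + q a c = cnt S c := cnt_erase _ c ha
  have e3 : cnt ((S.erase a).erase b) d + q b d = cnt (S.erase a) d := cnt_erase _ d hbS
  have e4 : cnt (S.erase a) d + q a d = cnt S d := cnt_erase _ d ha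
  have e5 : cnt ((S.erase c).erase d) a + q d a = cnt (S.erase c) a := cnt_erase _ a hdS
  have e6 : cnt (S.erase c) a + q c a = cnt S a := cnt_erase _ a hc
  have e7 : cnt ((S.erase c).erase d) b + q d b = cnt (S.erase c) b := cnt_erase _ b hdS
  have e8 : cnt (S.erase c) b + q c b = cnt S b := cnt_erase _ b hc
  have t1 := q_total hac
  have t2 := q_total had
  have t3 := q_total hbc
  have t4 := q_total hbd
  unfold sg
  rw [← pow_add, ← pow_add]
  exact neg_one_pow_congr (by omega)

lemma sg_anti {S : Finset (Fin n)} {a b c d : Fin n}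
    (ha : a ∈ S) (hb : b ∈ S) (hc : c ∈ S) (hd : d ∈ S)
    (hab : a ≠ b) (hac : a ≠ c) (had : a ≠ d) (hbc : b ≠ c) (hbd : b ≠ d) (hcd : c ≠ d) :
    sg K S a b * sg K ((S.erase a).erase b) c d
      = -(sg K S a d * sg K ((S.erase a).erase d) c b) := by
  have hbS : b ∈ S.erase a := Finset.mem_erase.2 ⟨hab.symm, hb⟩
  have hdS : d ∈ S.erase a := Finset.mem_erase.2 ⟨had.symm, hd⟩
  have e1 : cnt ((S.erase a).erase b) c + q b c = cnt (S.erase a) c := cnt_erase _ c hbS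
  have e2 : cnt (S.erase a) c + q a c = cnt S c := cnt_erase _ c ha
  have e3 : cnt ((S.erase a).erase b) d + q b d = cnt (S.erase a) d := cnt_erase _ d hbS
  have e4 : cnt (S.erase a) d + q a d = cnt S d := cnt_erase _ d ha
  have e5 : cnt ((S.erase a).erase d) c + q d c = cnt (S.erase a) c := cnt_erase _ c hdS
  have e6 : cnt ((S.erase a).erase d) b + q d b = cnt (S.erase a) b := cnt_erase _ b hdS
  have e7 : cnt (S.erase a) b + q a b = cnt S b := cnt_erase _ b ha
  have t1 := q_total hbd
  have t2 := q_total hbc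
  have t3 := q_total hcd
  have t4 := q_total hab
  have t5 := q_total had
  unfold sg
  rw [← pow_add, ← pow_add]
  exact neg_one_pow_anticongr (by omega)

lemma pf_expand_min {A : Matrix (Fin n) (Fin n) K} {T : Finset (Fin n)} {m : Fin n}
    (hm : m ∈ T) (hmin : ∀ x ∈ T, m ≤ x) :
    pf A T = ∑ k ∈ T.erase m, sg K T m k * A m k * pf A ((T.erase m).erase k) := by
  have hne : T.Nonempty := ⟨m, hm⟩
  have hminT : T.min' hne = m := le_antisymm (T.min'_le m hm) (hmin _ (T.min'_mem hne))
  rw [pf_expand A hne, hminT]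
  refine Finset.sum_congr rfl fun k hk => ?_
  have hkT : k ∈ T := Finset.mem_of_mem_erase hk
  have hkm : m < k := lt_of_le_of_ne (hmin k hkT) (Ne.symm (Finset.ne_of_mem_erase hk))
  have h0 : cnt T m = 0 := by
    unfold cnt
    rw [Finset.card_eq_zero, Finset.filter_eq_empty_iff]
    intro a ha
    exact not_lt.2 (hmin a ha)
  have e : cnt (T.erase m) k + q m k = cnt T k := cnt_erase T k hm
  have hq : q m k = 1 := by simp [q, hkm]
  have hq2 : q k m = 0 := by simp [q, asymm hkm]
  unfold sg
  rw [neg_one_pow_congr (K := K) (a := cnt (T.erase m) k)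
    (b := cnt T m + cnt T k + 1 + q k m) (by omega)]

lemma pf_E1 {A : Matrix (Fin n) (Fin n) K} (hA : ∀ p q, A q p = - A p q) :
    ∀ (N : ℕ) (S : Finset (Fin n)), S.card ≤ N → ∀ r ∈ S,
      pf A S = ∑ k ∈ S.erase r, sg K S r k * A r k * pf A ((S.erase r).erase k) := by
  intro N
  induction N with
  | zero =>
      intro S h1 r hr
      have := Finset.card_pos.2 ⟨r, hr⟩
      omega
  | succ N ih =>
    intro S h1 r hr
    have hne : S.Nonempty := ⟨r, hr⟩
    set m := S.min' hne with hm_def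
    have hmS : m ∈ S := S.min'_mem hne
    have hmin : ∀ x ∈ S, m ≤ x := fun x hx => S.min'_le x hx
    by_cases hrm : r = m
    · subst hrm
      exact pf_expand_min hmS hmin
    · have hrm' : m ≠ r := fun h => hrm h.symm
      have hrem : r ∈ S.erase m := Finset.mem_erase.2 ⟨hrm, hr⟩
      have hmer : m ∈ S.erase r := Finset.mem_erase.2 ⟨hrm', hmS⟩
      have hcS : 2 ≤ S.card := by
        have h2 : 0 < (S.erase m).card := Finset.card_pos.2 ⟨r, hrem⟩
        have := Finset.card_erase_of_mem hmS
        omega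
      set U := (S.erase m).erase r with hU_def
      -- left side expansion along the minimum
      rw [pf_expand_min hmS hmin, ← Finset.add_sum_erase _ _ hrem]
      -- right side: peel off the k = m term
      rw [← Finset.add_sum_erase _ _ hmer]
      have hUr : (S.erase r).erase m = U := Finset.erase_right_comm
      have hsingle : sg K S m r * A m r * pf A ((S.erase m).erase r)
          = sg K S r m * A r m * pf A ((S.erase r).erase m) := by
        rw [hA m r, Finset.erase_right_comm (s := S) (a := m) (b := r),
          sg_flip (a := r) (b := m) hrm]
        ring
      rw [hsingle]
      congr 1
      have hcardU : ∀ k ∈ U, ((S.erase m).erase k).card ≤ N := by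
        intro k hk
        have hkS : k ∈ S.erase m := Finset.mem_of_mem_erase hk
        have e1 := Finset.card_erase_of_mem hmS
        have e2 := Finset.card_erase_of_mem hkS
        omega
      calc ∑ k ∈ U, sg K S m k * A m k * pf A ((S.erase m).erase k)
          = ∑ k ∈ U, ∑ l ∈ U.erase k,
              sg K S m k * A m k * (sg K ((S.erase m).erase k) r l * A r l *
                pf A ((((S.erase m).erase k).erase r).erase l)) := by
            refine Finset.sum_congr rfl fun k hk => ?_
            have hkU : k ∈ S.erase m := Finset.mem_of_mem_erase hk
            have hkr : k ≠ r := Finset.ne_of_mem_erase hk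
            have hrk : r ∈ (S.erase m).erase k := Finset.mem_erase.2 ⟨hkr.symm, hrem⟩
            rw [ih ((S.erase m).erase k) (hcardU k hk) r hrk, Finset.mul_sum]
            have : ((S.erase m).erase k).erase r = U.erase k := by
              rw [hU_def]; exact Finset.erase_right_comm
            rw [this]
        _ = ∑ k ∈ U, ∑ l ∈ U.erase k,
              sg K S m l * A m l * (sg K ((S.erase m).erase l) r k * A r k *
                pf A ((((S.erase m).erase l).erase r).erase k)) :=
            sum_erase_swap U _
        _ = ∑ k ∈ U, ∑ l ∈ U.erase k,
              sg K S r k * A r k * (sg K ((S.erase r).erase k) m l * A m l *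
                pf A ((((S.erase r).erase k).erase m).erase l)) := by
            refine Finset.sum_congr rfl fun k hk => Finset.sum_congr rfl fun l hl => ?_
            have hkSm : k ∈ S.erase m := Finset.mem_of_mem_erase hk
            have hkS : k ∈ S := Finset.mem_of_mem_erase hkSm
            have hkm : k ≠ m := Finset.ne_of_mem_erase hkSm
            have hkr : k ≠ r := Finset.ne_of_mem_erase hk
            have hlU : l ∈ U := Finset.mem_of_mem_erase hl
            have hlk : l ≠ k := Finset.ne_of_mem_erase hl
            have hlSm : l ∈ S.erase m := Finset.mem_of_mem_erase hlU
            have hlS : l ∈ S := Finset.mem_of_mem_erase hlSm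
            have hlm : l ≠ m := Finset.ne_of_mem_erase hlSm
            have hlr : l ≠ r := Finset.ne_of_mem_erase hlU
            have hswap := sg_swap (K := K) hmS hlS hr hkS
              (fun h => hlm h.symm) hrm' (fun h => hkm h.symm) hlr hlk
              (fun h => hkr h.symm)
            have hsets : (((S.erase m).erase l).erase r).erase k
                = (((S.erase r).erase k).erase m).erase l := by
              ext x
              simp only [Finset.mem_erase]
              tauto
            rw [hsets]
            linear_combination (A m l * A r k *
              pf A ((((S.erase r).erase k).erase m).erase l)) * hswap
        _ = ∑ k ∈ U, sg K S r k * A r k * pf A ((S.erase r).erase k) := by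
            refine Finset.sum_congr rfl fun k hk => ?_
            have hkU : k ∈ S.erase m := Finset.mem_of_mem_erase hk
            have hkS : k ∈ S := Finset.mem_of_mem_erase hkU
            have hkm : k ≠ m := Finset.ne_of_mem_erase hkU
            have hkr : k ≠ r := Finset.ne_of_mem_erase hk
            have hmrk : m ∈ (S.erase r).erase k :=
              Finset.mem_erase.2 ⟨fun h => hkm h.symm, hmer⟩
            have hminrk : ∀ x ∈ (S.erase r).erase k, m ≤ x := fun x hx =>
              hmin x (Finset.mem_of_mem_erase (Finset.mem_of_mem_erase hx))
            rw [pf_expand_min hmrk hminrk, Finset.mul_sum]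
            have : ((S.erase r).erase k).erase m = U.erase k := by
              rw [hU_def, Finset.erase_right_comm (s := S.erase r)]
              rw [Finset.erase_right_comm (s := S)]
            rw [this]
        _ = ∑ k ∈ (S.erase r).erase m, sg K S r k * A r k * pf A ((S.erase r).erase k) := by
            rw [hUr]



lemma diag_zero [CharZero K] {A : Matrix (Fin n) (Fin n) K}
    (hA : ∀ p q, A q p = -A p q) (p : Fin n) : A p p = 0 := by
  have h := hA p p
  have h2 : (2 : K) * A p p = 0 := by
    rw [two_mul]
    nth_rewrite 2 [h]
    ring
  exact (mul_eq_zero.mp h2).resolve_left two_ne_zero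

lemma pf_E2 [CharZero K] {A : Matrix (Fin n) (Fin n) K} (hA : ∀ p q, A q p = -A p q)
    {S : Finset (Fin n)} {r s : Fin n} (hr : r ∈ S) (hs : s ∈ S) (hrs : r ≠ s) :
    ∑ k ∈ S.erase s, sg K S s k * A r k * pf A ((S.erase s).erase k) = 0 := by
  have hres : r ∈ S.erase s := Finset.mem_erase.2 ⟨hrs, hr⟩
  rw [← Finset.add_sum_erase _ _ hres, diag_zero hA r, mul_zero, zero_mul, zero_add]
  set V := (S.erase s).erase r with hV
  set F : Fin n → Fin n → K := fun k l => sg K S s k * A r k *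
      (sg K ((S.erase s).erase k) r l * A r l *
        pf A ((((S.erase s).erase k).erase r).erase l)) with hF
  have hexp : ∀ k ∈ V, sg K S s k * A r k * pf A ((S.erase s).erase k)
      = ∑ l ∈ V.erase k, F k l := by
    intro k hk
    have hkSs : k ∈ S.erase s := Finset.mem_of_mem_erase hk
    have hkr : k ≠ r := Finset.ne_of_mem_erase hk
    have hrk : r ∈ (S.erase s).erase k := Finset.mem_erase.2 ⟨hkr.symm, hres⟩
    rw [pf_E1 hA (((S.erase s).erase k).card) _ le_rfl r hrk, Finset.mul_sum]
    have hidx : ((S.erase s).erase k).erase r = V.erase k := by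
      rw [hV]
      exact Finset.erase_right_comm
    exact Finset.sum_congr hidx fun l _ => rfl
  rw [Finset.sum_congr rfl hexp]
  have hptw : ∀ k ∈ V, ∀ l ∈ V.erase k, F l k = - F k l := by
    intro k hk l hl
    have hkSs : k ∈ S.erase s := Finset.mem_of_mem_erase hk
    have hkS : k ∈ S := Finset.mem_of_mem_erase hkSs
    have hks : k ≠ s := Finset.ne_of_mem_erase hkSs
    have hkr : k ≠ r := Finset.ne_of_mem_erase hk
    have hlV : l ∈ V := Finset.mem_of_mem_erase hl
    have hlk : l ≠ k := Finset.ne_of_mem_erase hl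
    have hlSs : l ∈ S.erase s := Finset.mem_of_mem_erase hlV
    have hlS : l ∈ S := Finset.mem_of_mem_erase hlSs
    have hls : l ≠ s := Finset.ne_of_mem_erase hlSs
    have hlr : l ≠ r := Finset.ne_of_mem_erase hlV
    have hanti := sg_anti (K := K) (a := s) (b := k) (c := r) (d := l) hs hkS hr hlS
      (fun h => hks h.symm) (fun h => hrs h.symm) (fun h => hls h.symm)
      hkr (fun h => hlk h.symm) (fun h => hlr h.symm)
    have hsets : (((S.erase s).erase l).erase r).erase k
        = (((S.erase s).erase k).erase r).erase l := by
      ext x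
      simp only [Finset.mem_erase]
      tauto
    simp only [hF]
    rw [hsets]
    linear_combination (A r k * A r l *
      pf A ((((S.erase s).erase k).erase r).erase l)) * hanti
  have h2 : ∑ k ∈ V, ∑ l ∈ V.erase k, F k l = - ∑ k ∈ V, ∑ l ∈ V.erase k, F k l := by
    nth_rewrite 1 [sum_erase_swap V F]
    rw [← Finset.sum_neg_distrib]
    refine Finset.sum_congr rfl fun k hk => ?_
    rw [← Finset.sum_neg_distrib]
    exact Finset.sum_congr rfl fun l hl => hptw k hk l hl
  have h3 : (2 : K) * ∑ k ∈ V, ∑ l ∈ V.erase k, F k l = 0 := by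
    rw [two_mul]
    nth_rewrite 2 [h2]
    ring
  exact (mul_eq_zero.mp h3).resolve_left two_ne_zero

/-- add `c` times row `s` to row `r`, and `c` times column `s` to column `r`. -/
def rowop (A : Matrix (Fin n) (Fin n) K) (r s : Fin n) (c : K) : Matrix (Fin n) (Fin n) K :=
  Matrix.of fun p q => A p q + (if p = r then c * A s q else 0) + (if q = r then c * A p s else 0)

lemma rowop_skew {A : Matrix (Fin n) (Fin n) K} (hA : ∀ p q, A q p = -A p q)
    (r s : Fin n) (c : K) : ∀ p q, rowop A r s c q p = - rowop A r s c p q := by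
  intro p q
  simp only [rowop, Matrix.of_apply]
  rw [hA p q, hA p s, hA s q]
  split_ifs <;> ring

lemma rowop_apply_ne {A : Matrix (Fin n) (Fin n) K} {r s : Fin n} {c : K} {p q : Fin n}
    (hp : p ≠ r) (hq : q ≠ r) : rowop A r s c p q = A p q := by
  simp [rowop, hp, hq]

lemma pf_rowop [CharZero K] {A : Matrix (Fin n) (Fin n) K} (hA : ∀ p q, A q p = -A p q)
    {S : Finset (Fin n)} {r s : Fin n} (hr : r ∈ S) (hs : s ∈ S) (hrs : r ≠ s) (c : K) :
    pf (rowop A r s c) S = pf A S := by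
  have hA' := rowop_skew hA r s c
  rw [pf_E1 hA' S.card S le_rfl r hr, pf_E1 hA S.card S le_rfl r hr]
  have hpfc : ∀ k ∈ S.erase r, pf (rowop A r s c) ((S.erase r).erase k)
      = pf A ((S.erase r).erase k) := by
    intro k hk
    apply pf_congr ((S.erase r).erase k).card _ le_rfl
    intro p hp qq hq
    exact rowop_apply_ne (Finset.ne_of_mem_erase (Finset.mem_of_mem_erase hp))
      (Finset.ne_of_mem_erase (Finset.mem_of_mem_erase hq))
  have hterm : ∀ k ∈ S.erase r,
      sg K S r k * rowop A r s c r k * pf (rowop A r s c) ((S.erase r).erase k)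
      = sg K S r k * A r k * pf A ((S.erase r).erase k)
        + c * (sg K S r k * A s k * pf A ((S.erase r).erase k)) := by
    intro k hk
    have hkr : k ≠ r := Finset.ne_of_mem_erase hk
    have : rowop A r s c r k = A r k + c * A s k := by simp [rowop, hkr]
    rw [this, hpfc k hk]
    ring
  rw [Finset.sum_congr rfl hterm, Finset.sum_add_distrib, ← Finset.mul_sum,
    pf_E2 hA hs hr (fun h => hrs h.symm), mul_zero, add_zero]



/-- the principal submatrix of `A` on `S`, as a `Fin k` matrix. -/
def pmat (A : Matrix (Fin n) (Fin n) K) (S : Finset (Fin n)) {k : ℕ} (h : S.card = k) :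
    Matrix (Fin k) (Fin k) K :=
  Matrix.of fun a b => A (S.orderEmbOfFin h a) (S.orderEmbOfFin h b)

lemma orderEmbOfFin_symm_apply' (S : Finset (Fin n)) {k : ℕ} (h : S.card = k)
    {x : Fin n} (hx : x ∈ S) :
    S.orderEmbOfFin h ((S.orderIsoOfFin h).symm ⟨x, hx⟩) = x :=
  congrArg Subtype.val ((S.orderIsoOfFin h).apply_symm_apply ⟨x, hx⟩)

lemma orderEmbOfFin_inj (S : Finset (Fin n)) {k : ℕ} (h : S.card = k) {a b : Fin k} :
    S.orderEmbOfFin h a = S.orderEmbOfFin h b ↔ a = b :=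
  (S.orderEmbOfFin h).injective.eq_iff

lemma det_pmat_rowop [CharZero K] {A : Matrix (Fin n) (Fin n) K}
    (hA : ∀ p q, A q p = -A p q) {S : Finset (Fin n)} {r s : Fin n}
    (hr : r ∈ S) (hs : s ∈ S) (hrs : r ≠ s) (c : K) {k : ℕ} (hk : S.card = k) :
    (pmat (rowop A r s c) S hk).det = (pmat A S hk).det := by
  set e := S.orderEmbOfFin hk with he_def
  set ri := (S.orderIsoOfFin hk).symm ⟨r, hr⟩ with hri_def
  set si := (S.orderIsoOfFin hk).symm ⟨s, hs⟩ with hsi_def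
  have her : e ri = r := orderEmbOfFin_symm_apply' S hk hr
  have hes : e si = s := orderEmbOfFin_symm_apply' S hk hs
  have hrisi : ri ≠ si := by
    intro hh
    rw [hh, hes] at her
    exact hrs her.symm
  set M := pmat A S hk with hM_def
  set M1 := M.updateRow ri (M ri + c • M si) with hM1_def
  have hdiag : A s s = 0 := diag_zero hA s
  have hca : ∀ a : Fin k, (e a = r) ↔ (a = ri) := by
    intro a
    constructor
    · intro hh; apply e.injective; rw [hh, her]
    · intro hh; rw [hh, her]
  have hM1ab : ∀ a' b' : Fin k, M1 a' b'
      = if a' = ri then A r (e b') + c * A s (e b') else A (e a') (e b') := by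
    intro a' b'
    rw [hM1_def, Matrix.updateRow_apply]
    rcases eq_or_ne a' ri with rfl | hh
    · simp only [eq_self_iff_true, if_true]
      show (M ri + c • M si) b' = _
      simp only [Pi.add_apply, Pi.smul_apply, smul_eq_mul]
      show A (e ri) (e b') + c * A (e si) (e b') = _
      rw [her, hes]
    · rw [if_neg hh, if_neg hh]
      rfl
  have hear : ∀ a : Fin k, a ≠ ri → e a ≠ r := fun a ha hh => ha ((hca a).1 hh)
  have h1 : pmat (rowop A r s c) S hk
      = M1.updateCol ri (fun a => M1 a ri + c • M1 a si) := by
    ext a b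
    have hLHS : pmat (rowop A r s c) S hk a b
        = A (e a) (e b) + (if e a = r then c * A s (e b) else 0)
          + (if e b = r then c * A (e a) s else 0) := rfl
    rw [hLHS, Matrix.updateCol_apply]
    simp only [smul_eq_mul, hM1ab]
    rcases eq_or_ne a ri with rfl | ha
    · rcases eq_or_ne b ri with rfl | hb
      · simp only [her, hes, eq_self_iff_true, if_true]
        linear_combination (-(c * c)) * hdiag
      · simp only [if_neg hb, if_neg (hear b hb), her, hes, eq_self_iff_true, if_true]
        ring
    · rcases eq_or_ne b ri with rfl | hb
      · simp only [if_neg ha, if_neg (hear a ha), her, hes, eq_self_iff_true, if_true]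
        ring
      · simp only [if_neg ha, if_neg hb, if_neg (hear a ha), if_neg (hear b hb)]
        ring
  rw [h1, Matrix.det_updateCol_add_smul_self M1 hrisi c,
    Matrix.det_updateRow_add_smul_self M hrisi c]

lemma clear_aux [CharZero K] {A : Matrix (Fin n) (Fin n) K}
    (hA : ∀ p q, A q p = -A p q) {S : Finset (Fin n)} {x t : Fin n}
    (hx : x ∈ S) (ht : t ∈ S) (hxt : x ≠ t) (hAxt : A x t ≠ 0) :
    ∀ (T : Finset (Fin n)), T ⊆ (S.erase x).erase t →
    ∃ A' : Matrix (Fin n) (Fin n) K,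
      (∀ p q, A' q p = -A' p q) ∧
      (∀ p q, p ∉ T → q ∉ T → A' p q = A p q) ∧
      (∀ k ∈ T, A' x k = 0) ∧
      pf A' S = pf A S ∧
      (∀ (k : ℕ) (hk : S.card = k), (pmat A' S hk).det = (pmat A S hk).det) := by
  intro T
  induction T using Finset.induction_on with
  | empty =>
      intro _
      exact ⟨A, hA, fun _ _ _ _ => rfl, fun k hk => absurd hk (Finset.notMem_empty k),
        rfl, fun _ _ => rfl⟩
  | @insert k T hkT ihT =>
      intro hsub
      have hsubT : T ⊆ (S.erase x).erase t := fun y hy => hsub (Finset.mem_insert_of_mem hy)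
      obtain ⟨A'', hA'', hagree, hzero, hpf, hdet⟩ := ihT hsubT
      have hkmem : k ∈ (S.erase x).erase t := hsub (Finset.mem_insert_self k T)
      have hkt : k ≠ t := Finset.ne_of_mem_erase hkmem
      have hkx : k ≠ x := Finset.ne_of_mem_erase (Finset.mem_of_mem_erase hkmem)
      have hkS : k ∈ S := Finset.mem_of_mem_erase (Finset.mem_of_mem_erase hkmem)
      have hxT : x ∉ T := fun hh => (Finset.ne_of_mem_erase
        (Finset.mem_of_mem_erase (hsubT hh))) rfl
      have htT : t ∉ T := fun hh => (Finset.ne_of_mem_erase (hsubT hh)) rfl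
      have hxt' : A'' x t = A x t := hagree x t hxT htT
      have hxk' : A'' x k = A x k := hagree x k hxT hkT
      set c : K := -(A x k) / (A x t) with hc_def
      refine ⟨rowop A'' k t c, rowop_skew hA'' k t c, ?_, ?_, ?_, ?_⟩
      · intro p q hp hq
        have hpk : p ≠ k := fun hh => hp (hh ▸ Finset.mem_insert_self k T)
        have hqk : q ≠ k := fun hh => hq (hh ▸ Finset.mem_insert_self k T)
        rw [rowop_apply_ne hpk hqk]
        exact hagree p q (fun hh => hp (Finset.mem_insert_of_mem hh))
          (fun hh => hq (Finset.mem_insert_of_mem hh))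
      · intro l hl
        rcases Finset.mem_insert.1 hl with rfl | hlT
        · -- the newly cleared entry
          have hxk2 : x ≠ l := hkx.symm
          simp only [rowop, Matrix.of_apply, if_neg hxk2, if_pos rfl]
          rw [hxk', hxt', hc_def]
          field_simp
          simp
        · have hlk : l ≠ k := fun hh => hkT (hh ▸ hlT)
          rw [rowop_apply_ne hkx.symm hlk]
          exact hzero l hlT
      · rw [pf_rowop hA'' hkS ht hkt c, hpf]
      · intro m hm
        rw [det_pmat_rowop hA'' hkS ht hkt c hm, hdet m hm]



lemma sg_sq {S : Finset (Fin n)} (a b : Fin n) : sg K S a b * sg K S a b = 1 := by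
  unfold sg
  rw [← pow_add]
  rw [neg_one_pow_congr (K := K) (b := 0) (by omega), pow_zero]

lemma det_pmat_block [CharZero K] {B : Matrix (Fin n) (Fin n) K}
    (hB : ∀ p q, B q p = -B p q) {S : Finset (Fin n)} (hne : S.Nonempty)
    {t m : Fin n} (hm : m = S.min' hne) (ht : t ∈ S) (htm : t ≠ m)
    (hz : ∀ k ∈ S, k ≠ m → k ≠ t → B m k = 0)
    {c : ℕ} (hc : S.card = c + 2) (hc2 : ((S.erase m).erase t).card = c) :
    (pmat B S hc).det = B m t * B m t * (pmat B ((S.erase m).erase t) hc2).det := by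
  set e := S.orderEmbOfFin hc with he_def
  have he0 : e 0 = m := by rw [hm]; exact S.orderEmbOfFin_zero hc (by omega)
  set pt := (S.orderIsoOfFin hc).symm ⟨t, ht⟩ with hpt_def
  have hept : e pt = t := orderEmbOfFin_symm_apply' S hc ht
  have hpt0 : pt ≠ 0 := by
    intro hh
    apply htm
    rw [← hept, hh, he0]
  obtain ⟨pt', hpt'⟩ := Fin.eq_succ_of_ne_zero hpt0
  have hembS : ∀ j : Fin (c + 2), e j ∈ S := fun j => S.orderEmbOfFin_mem hc j
  have hinj : Function.Injective e := e.injective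
  -- Step 1 : expand along row 0
  rw [Matrix.det_succ_row_zero (pmat B S hc)]
  rw [Finset.sum_eq_single_of_mem pt (Finset.mem_univ pt) (fun j _ hj => by
    have hBmj : pmat B S hc 0 j = B m (e j) := by rw [← he0]; rfl
    rcases eq_or_ne j 0 with rfl | hj0
    · rw [hBmj, he0, diag_zero hB m, mul_zero, zero_mul]
    · have hejm : e j ≠ m := fun hh => hj0 (hinj (by rw [hh, he0]))
      have hejt : e j ≠ t := fun hh => hj (hinj (by rw [hh, hept]))
      rw [hBmj, hz (e j) (hembS j) hejm hejt, mul_zero, zero_mul])]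
  have hent : pmat B S hc 0 pt = B m t := by rw [← he0, ← hept]; rfl
  rw [hent]
  -- Step 2 : expand the submatrix along column 0
  set D1 := (pmat B S hc).submatrix Fin.succ pt.succAbove with hD1_def
  rw [Matrix.det_succ_column_zero D1]
  have hptpos : (0 : Fin (c + 2)) < pt := Fin.pos_of_ne_zero hpt0
  have hsA0 : pt.succAbove 0 = 0 := by
    rw [Fin.succAbove_of_castSucc_lt pt 0 (by rw [Fin.castSucc_zero]; exact hptpos),
      Fin.castSucc_zero]
  have hD1i0 : ∀ i : Fin (c + 1), D1 i 0 = B (e i.succ) m := by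
    intro i
    rw [hD1_def]
    show pmat B S hc i.succ (pt.succAbove 0) = _
    rw [hsA0, ← he0]
    rfl
  rw [Finset.sum_eq_single_of_mem pt' (Finset.mem_univ pt') (fun i _ hi => by
    have hitm : e i.succ ≠ m := fun hh => Fin.succ_ne_zero i (hinj (by rw [hh, he0]))
    have hit : e i.succ ≠ t := by
      intro hh
      apply hi
      have : i.succ = pt := hinj (by rw [hh, hept])
      rw [hpt'] at this
      exact Fin.succ_injective _ this
    rw [hD1i0 i, hB m (e i.succ), hz (e i.succ) (hembS i.succ) hitm hit, neg_zero,
      mul_zero, zero_mul])]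
  have hD1pt' : D1 pt' 0 = -B m t := by
    rw [hD1i0 pt', ← hpt', hept, hB m t]
  rw [hD1pt']
  -- Step 3 : identify the final submatrix
  set J := (S.erase m).erase t with hJ_def
  have hJmem : ∀ x : Fin n, x ∈ J ↔ x ∈ S ∧ x ≠ m ∧ x ≠ t := by
    intro x
    rw [hJ_def]
    simp only [Finset.mem_erase]
    tauto
  have hD2 : D1.submatrix pt'.succAbove Fin.succ = pmat B J hc2 := by
    have hf1 : (fun a : Fin c => e (pt'.succAbove a).succ) = ⇑(J.orderEmbOfFin hc2) := by
      apply Finset.orderEmbOfFin_unique hc2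
      · intro x
        rw [hJmem]
        refine ⟨hembS _, fun hh => Fin.succ_ne_zero _ (hinj (by rw [hh, he0])), fun hh => ?_⟩
        have : (pt'.succAbove x).succ = pt := hinj (by rw [hh, hept])
        rw [hpt'] at this
        exact Fin.succAbove_ne pt' x (Fin.succ_injective _ this)
      · exact e.strictMono.comp (Fin.strictMono_succ.comp (Fin.strictMono_succAbove pt'))
    have hf2 : (fun b : Fin c => e (pt.succAbove b.succ)) = ⇑(J.orderEmbOfFin hc2) := by
      apply Finset.orderEmbOfFin_unique hc2
      · intro x
        rw [hJmem]
        refine ⟨hembS _, fun hh => ?_, fun hh => Fin.succAbove_ne pt x.succ (hinj (by rw [hh, hept]))⟩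
        have h0 : pt.succAbove x.succ = 0 := hinj (by rw [hh, he0])
        exact Fin.succAbove_ne_zero hpt0 (Fin.succ_ne_zero x) h0
      · exact e.strictMono.comp ((Fin.strictMono_succAbove pt).comp Fin.strictMono_succ)
    ext a b
    show pmat B S hc (pt'.succAbove a).succ (pt.succAbove b.succ) = pmat B J hc2 a b
    show B (e (pt'.succAbove a).succ) (e (pt.succAbove b.succ)) = _
    rw [show e (pt'.succAbove a).succ = J.orderEmbOfFin hc2 a from congrFun hf1 a,
      show e (pt.succAbove b.succ) = J.orderEmbOfFin hc2 b from congrFun hf2 b]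
    rfl
  rw [hD2]
  -- combine the signs
  have hsign : ((-1 : K)) ^ ((pt : Fin (c+2)) : ℕ) * ((-1 : K)) ^ ((pt' : Fin (c+1)) : ℕ)
      = -1 := by
    have hval : ((pt : Fin (c+2)) : ℕ) = (pt' : ℕ) + 1 := by rw [hpt', Fin.val_succ]
    rw [hval, ← pow_add]
    rw [neg_one_pow_congr (K := K) (b := 1) (by omega), pow_one]
  linear_combination (-(B m t * B m t * (pmat B J hc2).det)) * hsign

lemma det_pmat_eq_pf_sq [CharZero K] :
    ∀ (N : ℕ) (A : Matrix (Fin n) (Fin n) K), (∀ p q, A q p = -A p q) →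
      ∀ (S : Finset (Fin n)), S.card ≤ N → ∀ (k : ℕ) (hk : S.card = k),
      (pmat A S hk).det = pf A S ^ 2 := by
  intro N
  induction N with
  | zero =>
      intro A hA S h1 k hk
      have hS : S = ∅ := Finset.card_eq_zero.1 (by omega)
      subst hS
      have hk0 : k = 0 := by simpa using hk.symm
      subst hk0
      rw [Matrix.det_fin_zero, pf_empty, one_pow]
  | succ N ih =>
      intro A hA S h1 k hk
      by_cases hne : S.Nonempty
      · set m := S.min' hne with hm_def
        have hmS : m ∈ S := S.min'_mem hne
        have hmin : ∀ x ∈ S, m ≤ x := fun x hx => S.min'_le x hx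
        have hkpos : 0 < k := by
          have := Finset.card_pos.2 hne
          omega
        by_cases hz : ∀ k' ∈ S.erase m, A m k' = 0
        · have hpf : pf A S = 0 := by
            rw [pf_expand_min hmS hmin]
            exact Finset.sum_eq_zero fun j hj => by rw [hz j hj, mul_zero, zero_mul]
          have hdet0 : (pmat A S hk).det = 0 := by
            apply Matrix.det_eq_zero_of_row_eq_zero ⟨0, hkpos⟩
            intro j
            have he0 : S.orderEmbOfFin hk ⟨0, hkpos⟩ = m := S.orderEmbOfFin_zero hk hkpos
            show A (S.orderEmbOfFin hk ⟨0, hkpos⟩) (S.orderEmbOfFin hk j) = 0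
            rw [he0]
            rcases eq_or_ne (S.orderEmbOfFin hk j) m with hh | hh
            · rw [hh]; exact diag_zero hA m
            · exact hz _ (Finset.mem_erase.2 ⟨hh, S.orderEmbOfFin_mem hk j⟩)
          rw [hdet0, hpf]
          ring
        · push_neg at hz
          obtain ⟨t, htm, hAt⟩ := hz
          have htS : t ∈ S := Finset.mem_of_mem_erase htm
          have htne : t ≠ m := Finset.ne_of_mem_erase htm
          have hmt : m ≠ t := fun h => htne h.symm
          obtain ⟨A', hA', hagree, hzero, hpf, hdet⟩ :=
            clear_aux hA hmS htS hmt hAt ((S.erase m).erase t) Finset.Subset.rfl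
          have hcS : 2 ≤ S.card := by
            have h2 : 0 < (S.erase m).card := Finset.card_pos.2 ⟨t, htm⟩
            have := Finset.card_erase_of_mem hmS
            omega
          obtain ⟨c, rfl⟩ : ∃ c, k = c + 2 := ⟨k - 2, by omega⟩
          have hJcard : ((S.erase m).erase t).card = c := by
            rw [Finset.card_erase_of_mem htm, Finset.card_erase_of_mem hmS, hk]
            omega
          have hmemT : ∀ x : Fin n, x ∈ S → x ≠ m → x ≠ t → x ∈ (S.erase m).erase t :=
            fun x hxS hxm hxt => Finset.mem_erase.2 ⟨hxt, Finset.mem_erase.2 ⟨hxm, hxS⟩⟩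
          have hmT : m ∉ (S.erase m).erase t := fun hh =>
            (Finset.ne_of_mem_erase (Finset.mem_of_mem_erase hh)) rfl
          have htT : t ∉ (S.erase m).erase t := fun hh => (Finset.ne_of_mem_erase hh) rfl
          have hA'mt : A' m t = A m t := hagree m t hmT htT
          have hz' : ∀ k' ∈ S, k' ≠ m → k' ≠ t → A' m k' = 0 :=
            fun k' h1' h2' h3' => hzero k' (hmemT k' h1' h2' h3')
          have hblock := det_pmat_block hA' hne hm_def htS htne hz' hk hJcard
          -- pf A S = sg * A m t * pf A' J
          have hpfS : pf A S = sg K S m t * A m t * pf A' ((S.erase m).erase t) := by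
            rw [← hpf, pf_expand_min (A := A') hmS hmin]
            rw [Finset.sum_eq_single_of_mem t htm (fun k' hk' hk't => by
              have hk'm : k' ≠ m := Finset.ne_of_mem_erase hk'
              rw [hzero k' (hmemT k' (Finset.mem_of_mem_erase hk') hk'm hk't),
                mul_zero, zero_mul])]
            rw [hA'mt]
          -- inductive hypothesis on J
          have hJle : ((S.erase m).erase t).card ≤ N := by omega
          have hih := ih A' hA' ((S.erase m).erase t) hJle c hJcard
          rw [← hdet (c + 2) hk, hblock, hih, hpfS, hA'mt]
          have hsq := sg_sq (K := K) (S := S) m t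
          linear_combination
            (-(A m t * A m t * pf A' ((S.erase m).erase t) ^ 2)) * hsq
      · have hS : S = ∅ := Finset.not_nonempty_iff_eq_empty.1 hne
        subst hS
        have hk0 : k = 0 := by simpa using hk.symm
        subst hk0
        rw [Matrix.det_fin_zero, pf_empty, one_pow]



lemma sum_emb {S : Finset (Fin n)} {k : ℕ} (hk : S.card = k) (f : Fin n → K) :
    ∑ x ∈ S, f x = ∑ a : Fin k, f (S.orderEmbOfFin hk a) := by
  have himg : Finset.image (⇑(S.orderEmbOfFin hk)) Finset.univ = S := by
    ext x
    simp only [Finset.mem_image, Finset.mem_univ, true_and]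
    constructor
    · rintro ⟨a, rfl⟩
      exact S.orderEmbOfFin_mem hk a
    · intro hx
      have : x ∈ Set.range ⇑(S.orderEmbOfFin hk) := by
        rw [S.range_orderEmbOfFin hk]
        exact hx
      obtain ⟨a, ha⟩ := this
      exact ⟨a, ha⟩
  conv_lhs => rw [← himg]
  rw [Finset.sum_image (fun x _ y _ h => (S.orderEmbOfFin hk).injective h)]

lemma cnt_emb {S : Finset (Fin n)} {k : ℕ} (hk : S.card = k) (a : Fin k) :
    cnt S (S.orderEmbOfFin hk a) = (a : ℕ) := by
  set e := S.orderEmbOfFin hk with he_def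
  have himg : S.filter (· < e a) = (Finset.univ.filter (fun b : Fin k => b < a)).image ⇑e := by
    ext x
    simp only [Finset.mem_filter, Finset.mem_image, Finset.mem_univ, true_and]
    constructor
    · rintro ⟨hxS, hxlt⟩
      have : x ∈ Set.range ⇑e := by rw [he_def, S.range_orderEmbOfFin hk]; exact hxS
      obtain ⟨b, rfl⟩ := this
      exact ⟨b, e.lt_iff_lt.1 hxlt, rfl⟩
    · rintro ⟨b, hba, rfl⟩
      exact ⟨S.orderEmbOfFin_mem hk b, e.lt_iff_lt.2 hba⟩
  have hcard : (Finset.univ.filter (fun b : Fin k => b < a)).card = a := by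
    have : (Finset.univ.filter (fun b : Fin k => b < a)) = Finset.Iio a := by
      ext x; simp
    rw [this, Fin.card_Iio]
  unfold cnt
  rw [himg, Finset.card_image_of_injective _ e.injective, hcard]

lemma key_generic [CharZero K] {A : Matrix (Fin n) (Fin n) K}
    (hA : ∀ p q, A q p = -A p q) {I : Finset (Fin n)} {i j : Fin n}
    (hi : i ∉ I) (hj : j ∉ I) (hij : i < j) (hEven : Even I.card)
    (hpf : pf A (insert i (insert j I)) ≠ 0) :
    (A.submatrix ((insert i I).orderEmbOfFin (Finset.card_insert_of_notMem hi))
        ((insert j I).orderEmbOfFin (Finset.card_insert_of_notMem hj))).det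
      = pf A (insert i (insert j I)) * pf A I := by
  have hijne : i ≠ j := ne_of_lt hij
  set S := insert i (insert j I) with hS_def
  have hiS : i ∈ S := Finset.mem_insert_self i _
  have hjS : j ∈ S := Finset.mem_insert_of_mem (Finset.mem_insert_self j I)
  have hiJI : i ∉ insert j I := by
    simp only [Finset.mem_insert]
    push_neg
    exact ⟨hijne, hi⟩
  have hk : S.card = I.card + 2 := by
    rw [hS_def, Finset.card_insert_of_notMem hiJI, Finset.card_insert_of_notMem hj]
  have hSeven : Even S.card := by
    obtain ⟨c, hc⟩ := hEven
    exact ⟨c + 1, by omega⟩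
  have hSj : S.erase j = insert i I := by
    rw [hS_def, Finset.erase_insert_of_ne hijne, Finset.erase_insert hj]
  have hSi : S.erase i = insert j I := by
    rw [hS_def, Finset.erase_insert hiJI]
  have hI2 : (S.erase j).erase i = I := by
    rw [hSj, Finset.erase_insert hi]
  set e := S.orderEmbOfFin hk with he_def
  have hinj : Function.Injective ⇑e := e.injective
  set M := pmat A S hk with hM_def
  set B : Matrix (Fin (I.card + 2)) (Fin (I.card + 2)) K := Matrix.of fun a b =>
    sg K S (e b) (e a) * pf A ((S.erase (e b)).erase (e a)) with hB_def
  -- M * B = pf A S • 1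
  have hMB : M * B = pf A S • (1 : Matrix (Fin (I.card + 2)) (Fin (I.card + 2)) K) := by
    ext r s
    rw [Matrix.mul_apply]
    have hbody : ∀ a : Fin (I.card + 2), M r a * B a s
        = sg K S (e s) (e a) * A (e r) (e a) * pf A ((S.erase (e s)).erase (e a)) := by
      intro a
      show A (e r) (e a) * (sg K S (e s) (e a) * pf A ((S.erase (e s)).erase (e a))) = _
      ring
    rw [Finset.sum_congr rfl fun a _ => hbody a]
    rw [← sum_emb hk (fun x => sg K S (e s) x * A (e r) x * pf A ((S.erase (e s)).erase x))]
    have hesS : e s ∈ S := S.orderEmbOfFin_mem hk s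
    rw [← Finset.add_sum_erase _ _ hesS]
    have hdead : sg K S (e s) (e s) * A (e r) (e s)
        * pf A ((S.erase (e s)).erase (e s)) = 0 := by
      rw [Finset.erase_idem]
      have hodd : Odd (S.erase (e s)).card := by
        rw [Finset.card_erase_of_mem hesS, hk]
        obtain ⟨c, hc⟩ := hEven
        exact ⟨c, by omega⟩
      rw [pf_odd (S.erase (e s)).card _ le_rfl hodd, mul_zero]
    rw [hdead, zero_add]
    rcases eq_or_ne r s with rfl | hrs
    · rw [(pf_E1 hA S.card S le_rfl (e r) (S.orderEmbOfFin_mem hk r)).symm,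
        Matrix.smul_apply, Matrix.one_apply_eq, smul_eq_mul, mul_one]
    · have herss : e r ≠ e s := fun hh => hrs (hinj hh)
      rw [pf_E2 hA (S.orderEmbOfFin_mem hk r) hesS herss, Matrix.smul_apply,
        Matrix.one_apply_ne hrs, smul_eq_mul, mul_zero]
  -- det M • B = pf A S • adjugate M
  have hadjB : M.det • B = pf A S • M.adjugate := by
    have h1 : M.adjugate * (M * B) = M.adjugate * (pf A S • 1) := by rw [hMB]
    rw [← Matrix.mul_assoc, Matrix.adjugate_mul, Matrix.smul_mul, Matrix.one_mul,
      Matrix.mul_smul, Matrix.mul_one] at h1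
    exact h1
  have hdetM : M.det = pf A S ^ 2 :=
    det_pmat_eq_pf_sq S.card A hA S le_rfl _ hk
  have hadj : ∀ a b : Fin (I.card + 2), M.adjugate a b = pf A S * B a b := by
    intro a b
    have h2 := congrFun (congrFun hadjB a) b
    rw [Matrix.smul_apply, Matrix.smul_apply, smul_eq_mul, smul_eq_mul, hdetM] at h2
    apply mul_left_cancel₀ hpf
    rw [← h2]
    ring
  -- the positions of i and j
  set pi' := (S.orderIsoOfFin hk).symm ⟨i, hiS⟩ with hpi_def
  set pj' := (S.orderIsoOfFin hk).symm ⟨j, hjS⟩ with hpj_def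
  have hepi : e pi' = i := orderEmbOfFin_symm_apply' S hk hiS
  have hepj : e pj' = j := orderEmbOfFin_symm_apply' S hk hjS
  -- adjugate entry as a cofactor
  have hcof : M.adjugate pi' pj'
      = (-1 : K) ^ ((pj' : ℕ) + (pi' : ℕ))
        * (M.submatrix pj'.succAbove pi'.succAbove).det := by
    rw [Matrix.adjugate_apply, Matrix.det_succ_row _ pj']
    rw [Finset.sum_eq_single_of_mem pi' (Finset.mem_univ pi') (fun b _ hb => by
      rw [Matrix.updateRow_self, Pi.single_eq_of_ne hb, mul_zero, zero_mul])]
    rw [Matrix.updateRow_self, Pi.single_eq_same, mul_one]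
    have hsub : (M.updateRow pj' (Pi.single pi' 1)).submatrix pj'.succAbove pi'.succAbove
        = M.submatrix pj'.succAbove pi'.succAbove := by
      ext a b
      show (M.updateRow pj' (Pi.single pi' 1)) (pj'.succAbove a) (pi'.succAbove b) = _
      rw [Matrix.updateRow_ne (Fin.succAbove_ne pj' a)]
      rfl
    rw [hsub]
  -- identify the submatrix in the statement
  have hrows : (fun a : Fin (I.card + 1) => e (pj'.succAbove a))
      = ⇑((insert i I).orderEmbOfFin (Finset.card_insert_of_notMem hi)) := by
    apply Finset.orderEmbOfFin_unique
    · intro x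
      rw [← hSj]
      exact Finset.mem_erase.2 ⟨fun hh => Fin.succAbove_ne pj' x (hinj (by rw [hh, hepj])),
        S.orderEmbOfFin_mem hk _⟩
    · exact e.strictMono.comp (Fin.strictMono_succAbove pj')
  have hcols : (fun b : Fin (I.card + 1) => e (pi'.succAbove b))
      = ⇑((insert j I).orderEmbOfFin (Finset.card_insert_of_notMem hj)) := by
    apply Finset.orderEmbOfFin_unique
    · intro x
      rw [← hSi]
      exact Finset.mem_erase.2 ⟨fun hh => Fin.succAbove_ne pi' x (hinj (by rw [hh, hepi])),
        S.orderEmbOfFin_mem hk _⟩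
    · exact e.strictMono.comp (Fin.strictMono_succAbove pi')
  have hNM : A.submatrix (⇑((insert i I).orderEmbOfFin (Finset.card_insert_of_notMem hi)))
        (⇑((insert j I).orderEmbOfFin (Finset.card_insert_of_notMem hj)))
      = M.submatrix pj'.succAbove pi'.succAbove := by
    ext a b
    rw [Matrix.submatrix_apply, ← congrFun hrows a, ← congrFun hcols b]
    rfl
  have hBval : B pi' pj' = (-1 : K) ^ ((pj' : ℕ) + (pi' : ℕ)) * pf A I := by
    show sg K S (e pj') (e pi') * pf A ((S.erase (e pj')).erase (e pi')) = _
    rw [hepi, hepj, hI2]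
    congr 1
    unfold sg
    rw [show cnt S j = (pj' : ℕ) from by rw [← hepj]; exact cnt_emb hk pj',
      show cnt S i = (pi' : ℕ) from by rw [← hepi]; exact cnt_emb hk pi',
      show q i j = 1 from by simp [q, hij]]
    exact neg_one_pow_congr (by omega)
  have hsq : (-1 : K) ^ ((pj' : ℕ) + (pi' : ℕ)) * (-1 : K) ^ ((pj' : ℕ) + (pi' : ℕ)) = 1 := by
    rw [← pow_add, neg_one_pow_congr (K := K) (b := 0) (by omega), pow_zero]
  calc (A.submatrix (⇑((insert i I).orderEmbOfFin (Finset.card_insert_of_notMem hi)))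
        (⇑((insert j I).orderEmbOfFin (Finset.card_insert_of_notMem hj)))).det
      = (M.submatrix pj'.succAbove pi'.succAbove).det := by rw [hNM]
    _ = ((-1 : K) ^ ((pj' : ℕ) + (pi' : ℕ)) * (-1 : K) ^ ((pj' : ℕ) + (pi' : ℕ)))
          * (M.submatrix pj'.succAbove pi'.succAbove).det := by rw [hsq, one_mul]
    _ = (-1 : K) ^ ((pj' : ℕ) + (pi' : ℕ)) * M.adjugate pi' pj' := by rw [hcof]; ring
    _ = (-1 : K) ^ ((pj' : ℕ) + (pi' : ℕ)) * (pf A S * B pi' pj') := by rw [hadj]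
    _ = ((-1 : K) ^ ((pj' : ℕ) + (pi' : ℕ)) * (-1 : K) ^ ((pj' : ℕ) + (pi' : ℕ)))
          * (pf A S * pf A I) := by rw [hBval]; ring
    _ = pf A S * pf A I := by rw [hsq, one_mul]



/-- the skew "all ones above the diagonal" matrix -/
noncomputable def dM : Matrix (Fin n) (Fin n) ℝ :=
  Matrix.of fun p q => if p < q then 1 else if q < p then -1 else 0

lemma dM_skew : ∀ p q : Fin n, dM q p = -(dM p q) := by
  intro p q
  simp only [dM, Matrix.of_apply]
  rcases lt_trichotomy p q with h | h | h
  · rw [if_neg (asymm h), if_pos h, if_pos h]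
  · subst h; simp
  · rw [if_pos h, if_neg (asymm h), if_pos h]; ring

lemma sgn_sum : ∀ (N : ℕ) (T : Finset (Fin n)), T.card ≤ N →
    ∑ k ∈ T, (-1 : ℝ) ^ (cnt T k) = if Even T.card then 0 else 1 := by
  intro N
  induction N with
  | zero =>
      intro T h1
      have : T = ∅ := Finset.card_eq_zero.1 (by omega)
      subst this
      simp
  | succ N ih =>
      intro T h1
      by_cases hne : T.Nonempty
      · set M := T.max' hne with hM_def
        have hMT : M ∈ T := T.max'_mem hne
        rw [← Finset.add_sum_erase _ _ hMT]
        have hcntM : cnt T M = T.card - 1 := by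
          unfold cnt
          have : T.filter (· < M) = T.erase M := by
            ext x
            simp only [Finset.mem_filter, Finset.mem_erase]
            constructor
            · rintro ⟨hx, hlt⟩; exact ⟨ne_of_lt hlt, hx⟩
            · rintro ⟨hx, hmem⟩
              exact ⟨hmem, lt_of_le_of_ne (T.le_max' x hmem) hx⟩
          rw [this, Finset.card_erase_of_mem hMT]
        have hrest : ∀ k ∈ T.erase M, cnt T k = cnt (T.erase M) k := by
          intro k hk
          have := cnt_erase T (x := M) k hMT
          have hqMk : q M k = 0 := by
            simp only [q, ite_eq_right_iff]
            intro hlt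
            exact absurd (T.le_max' k (Finset.mem_of_mem_erase hk)) (not_le.2 hlt)
          omega
        rw [Finset.sum_congr rfl fun k hk => by rw [hrest k hk]]
        rw [ih (T.erase M) (by rw [Finset.card_erase_of_mem hMT]; omega)]
        rw [Finset.card_erase_of_mem hMT, hcntM]
        have hpos : 1 ≤ T.card := Finset.card_pos.2 hne
        rcases Nat.even_or_odd T.card with he | ho
        · obtain ⟨c, hc⟩ := he
          have hE : Even T.card := ⟨c, hc⟩
          rw [if_neg (Nat.not_even_iff.2 (by omega : (T.card - 1) % 2 = 1)), if_pos hE]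
          rw [neg_one_pow_congr (K := ℝ) (b := 1) (by omega), pow_one]
          ring
        · obtain ⟨c, hc⟩ := ho
          have hE : Even (T.card - 1) := ⟨c, by omega⟩
          rw [if_pos hE, if_neg (Nat.not_even_iff.2 (by omega : T.card % 2 = 1))]
          rw [neg_one_pow_congr (K := ℝ) (b := 0) (by omega), pow_zero]
          ring
      · rw [Finset.not_nonempty_iff_eq_empty.1 hne]
        simp

lemma pf_dM_one : ∀ (N : ℕ) (T : Finset (Fin n)), T.card ≤ N → Even T.card →
    pf (dM (n := n)) T = 1 := by
  intro N
  induction N with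
  | zero =>
      intro T h1 _
      have : T = ∅ := Finset.card_eq_zero.1 (by omega)
      subst this
      exact pf_empty
  | succ N ih =>
      intro T h1 h2
      by_cases hne : T.Nonempty
      · rw [pf_expand _ hne]
        set m := T.min' hne with hm_def
        have hmT : m ∈ T := T.min'_mem hne
        have hTc : 1 ≤ T.card := Finset.card_pos.2 hne
        have hstep : ∀ k ∈ T.erase m,
            (-1 : ℝ) ^ cnt (T.erase m) k * dM m k * pf (dM (n := n)) ((T.erase m).erase k)
            = (-1 : ℝ) ^ cnt (T.erase m) k := by
          intro k hk
          have hmk : m < k := lt_of_le_of_ne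
            (T.min'_le k (Finset.mem_of_mem_erase hk)) (Ne.symm (Finset.ne_of_mem_erase hk))
          have hd : dM m k = 1 := by simp [dM, hmk]
          have hpfs : pf (dM (n := n)) ((T.erase m).erase k) = 1 := by
            apply ih _ ?_ ?_
            · rw [Finset.card_erase_of_mem hk, Finset.card_erase_of_mem hmT]
              omega
            · rw [Finset.card_erase_of_mem hk, Finset.card_erase_of_mem hmT]
              obtain ⟨c, hc⟩ := h2
              exact ⟨c - 1, by omega⟩
          rw [hd, hpfs, mul_one, mul_one]
        rw [Finset.sum_congr rfl hstep, sgn_sum (T.erase m).card _ le_rfl]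
        rw [Finset.card_erase_of_mem hmT]
        rw [if_neg (Nat.not_even_iff.2 (by obtain ⟨c, hc⟩ := h2; omega))]
      · rw [Finset.not_nonempty_iff_eq_empty.1 hne]
        exact pf_empty



open Polynomial in
/-- the generic perturbation of `A` -/
noncomputable def AX (A : Matrix (Fin n) (Fin n) ℝ) :
    Matrix (Fin n) (Fin n) (Polynomial ℝ) :=
  Matrix.of fun p q => Polynomial.C (A p q) + Polynomial.C (dM p q) * Polynomial.X

lemma AX_skew {A : Matrix (Fin n) (Fin n) ℝ} (hA : ∀ p q, A q p = -A p q) :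
    ∀ p q, AX A q p = -(AX A p q) := by
  intro p q
  simp only [AX, Matrix.of_apply, hA p q, dM_skew p q, map_neg]
  ring

lemma AX_deg (A : Matrix (Fin n) (Fin n) ℝ) :
    ∀ (N : ℕ) (T : Finset (Fin n)), T.card ≤ N →
      (pfr (AX A) T).natDegree ≤ T.card / 2 := by
  intro N
  induction N with
  | zero =>
      intro T h1
      have : T = ∅ := Finset.card_eq_zero.1 (by omega)
      subst this
      rw [pfr_empty]
      simp
  | succ N ih =>
      intro T h1
      by_cases hne : T.Nonempty
      · rw [pfr_expand _ hne]
        apply Polynomial.natDegree_sum_le_of_forall_le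
        intro k hk
        set m := T.min' hne with hm_def
        have hmT : m ∈ T := T.min'_mem hne
        have hck : ((T.erase m).erase k).card = T.card - 2 := by
          rw [Finset.card_erase_of_mem hk, Finset.card_erase_of_mem hmT]
          omega
        have hTc : 2 ≤ T.card := by
          have h2 : 0 < (T.erase m).card := Finset.card_pos.2 ⟨k, hk⟩
          have := Finset.card_erase_of_mem hmT
          omega
        have hP : (pfr (AX A) ((T.erase m).erase k)).natDegree ≤ (T.card - 2) / 2 := by
          rw [← hck]
          exact ih _ (by omega)
        have hC : ((-1 : Polynomial ℝ)) ^ cnt (T.erase m) k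
            = Polynomial.C ((-1 : ℝ) ^ cnt (T.erase m) k) := by
          rw [map_pow, map_neg, map_one]
        have hently : (AX A m k).natDegree ≤ 1 := by
          refine le_trans (Polynomial.natDegree_add_le _ _) (max_le (by simp) ?_)
          refine le_trans (Polynomial.natDegree_mul_le) ?_
          simp [Polynomial.natDegree_X_le]
        calc ((-1 : Polynomial ℝ) ^ cnt (T.erase m) k * AX A m k
                * pfr (AX A) ((T.erase m).erase k)).natDegree
            ≤ ((-1 : Polynomial ℝ) ^ cnt (T.erase m) k * AX A m k).natDegree
                + (pfr (AX A) ((T.erase m).erase k)).natDegree :=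
              Polynomial.natDegree_mul_le
          _ ≤ (((-1 : Polynomial ℝ) ^ cnt (T.erase m) k).natDegree + (AX A m k).natDegree)
                + (pfr (AX A) ((T.erase m).erase k)).natDegree :=
              Nat.add_le_add_right Polynomial.natDegree_mul_le _
          _ ≤ (0 + 1) + (T.card - 2) / 2 := by
              refine add_le_add (add_le_add ?_ hently) hP
              rw [hC]
              simp
          _ ≤ T.card / 2 := by omega
      · rw [Finset.not_nonempty_iff_eq_empty.1 hne, pfr_empty]
        simp

lemma AX_coeff (A : Matrix (Fin n) (Fin n) ℝ) :
    ∀ (N : ℕ) (T : Finset (Fin n)), T.card ≤ N → Even T.card →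
      (pfr (AX A) T).coeff (T.card / 2) = pf (dM (n := n)) T := by
  intro N
  induction N with
  | zero =>
      intro T h1 _
      have : T = ∅ := Finset.card_eq_zero.1 (by omega)
      subst this
      rw [pfr_empty, pf_empty]
      simp
  | succ N ih =>
      intro T h1 h2
      by_cases hne : T.Nonempty
      · have hTc : 2 ≤ T.card := by
          obtain ⟨c, hc⟩ := h2
          have := Finset.card_pos.2 hne
          omega
        set m := T.min' hne with hm_def
        have hmT : m ∈ T := T.min'_mem hne
        have hN0 : T.card / 2 = (T.card - 2) / 2 + 1 := by
          obtain ⟨c, hc⟩ := h2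
          omega
        rw [pfr_expand _ hne, pf_expand _ hne, Polynomial.finset_sum_coeff]
        refine Finset.sum_congr rfl fun k hk => ?_
        have hck : ((T.erase m).erase k).card = T.card - 2 := by
          rw [Finset.card_erase_of_mem hk, Finset.card_erase_of_mem hmT]
          omega
        set P := pfr (AX A) ((T.erase m).erase k) with hP_def
        have hdegP : P.natDegree ≤ (T.card - 2) / 2 := by
          rw [hP_def, ← hck]
          exact AX_deg A ((T.erase m).erase k).card _ le_rfl
        have hcoeffP : P.coeff ((T.card - 2) / 2) = pf (dM (n := n)) ((T.erase m).erase k) := by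
          have := ih ((T.erase m).erase k) (by omega)
            (by rw [hck]; obtain ⟨c, hc⟩ := h2; exact ⟨c - 1, by omega⟩)
          rw [hck] at this
          exact this
        have hC : ((-1 : Polynomial ℝ)) ^ cnt (T.erase m) k
            = Polynomial.C ((-1 : ℝ) ^ cnt (T.erase m) k) := by
          rw [map_pow, map_neg, map_one]
        have hAXmk : AX A m k = Polynomial.C (A m k) + Polynomial.C (dM m k) * Polynomial.X :=
          rfl
        rw [hC, hAXmk, hN0]
        rw [mul_assoc, Polynomial.coeff_C_mul, add_mul, Polynomial.coeff_add,
          Polynomial.coeff_C_mul, mul_assoc, Polynomial.coeff_C_mul,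
          Polynomial.coeff_X_mul]
        rw [Polynomial.coeff_eq_zero_of_natDegree_lt (lt_of_le_of_lt hdegP (by omega)),
          hcoeffP]
        ring
      · rw [Finset.not_nonempty_iff_eq_empty.1 hne, pfr_empty, pf_empty]
        simp

lemma AX_ne_zero (A : Matrix (Fin n) (Fin n) ℝ) {T : Finset (Fin n)} (h2 : Even T.card) :
    pfr (AX A) T ≠ 0 := by
  intro hh
  have h3 := AX_coeff A T.card T le_rfl h2
  rw [hh, Polynomial.coeff_zero, pf_dM_one T.card T le_rfl h2] at h3
  exact one_ne_zero h3.symm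

lemma key_real {A : Matrix (Fin n) (Fin n) ℝ} (hA : ∀ p q, A q p = -A p q)
    {I : Finset (Fin n)} {i j : Fin n} (hi : i ∉ I) (hj : j ∉ I) (hij : i < j)
    (hEven : Even I.card) :
    (A.submatrix ((insert i I).orderEmbOfFin (Finset.card_insert_of_notMem hi))
        ((insert j I).orderEmbOfFin (Finset.card_insert_of_notMem hj))).det
      = pf A (insert i (insert j I)) * pf A I := by
  haveI : CharZero (RatFunc ℝ) :=
    charZero_of_injective_algebraMap (IsFractionRing.injective (Polynomial ℝ) (RatFunc ℝ))
  set φ : Polynomial ℝ →+* RatFunc ℝ := algebraMap (Polynomial ℝ) (RatFunc ℝ) with hφ_def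
  have hφinj : Function.Injective ⇑φ := IsFractionRing.injective (Polynomial ℝ) (RatFunc ℝ)
  set Aq := AX A with hAq_def
  have hAq : ∀ p q, Aq q p = -(Aq p q) := AX_skew hA
  set Ap := Aq.map ⇑φ with hAp_def
  have hAp : ∀ p q, Ap q p = -(Ap p q) := by
    intro p q
    simp only [hAp_def, Matrix.map_apply, hAq p q, map_neg]
  have hijne : i ≠ j := ne_of_lt hij
  have hiJI : i ∉ insert j I := by
    simp only [Finset.mem_insert]
    push_neg
    exact ⟨hijne, hi⟩
  have hScard : (insert i (insert j I)).card = I.card + 2 := by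
    rw [Finset.card_insert_of_notMem hiJI, Finset.card_insert_of_notMem hj]
  have hSeven : Even (insert i (insert j I)).card := by
    rw [hScard]
    obtain ⟨c, hc⟩ := hEven
    exact ⟨c + 1, by omega⟩
  have hbridge : ∀ T : Finset (Fin n), pf Ap T = φ (pfr Aq T) := by
    intro T
    rw [← pfr_eq_pf T.card T le_rfl, hAp_def, pfr_map φ T.card T le_rfl]
  have hpfS : pf Ap (insert i (insert j I)) ≠ 0 := by
    rw [hbridge]
    intro hh
    exact AX_ne_zero A hSeven (hφinj (by rw [hh, map_zero]))
  have hKg := key_generic hAp hi hj hij hEven hpfS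
  -- transfer from RatFunc ℝ down to Polynomial ℝ
  have hsubφ : Ap.submatrix
        (⇑((insert i I).orderEmbOfFin (Finset.card_insert_of_notMem hi)))
        (⇑((insert j I).orderEmbOfFin (Finset.card_insert_of_notMem hj)))
      = (Aq.submatrix
        (⇑((insert i I).orderEmbOfFin (Finset.card_insert_of_notMem hi)))
        (⇑((insert j I).orderEmbOfFin (Finset.card_insert_of_notMem hj)))).map ⇑φ := rfl
  rw [hsubφ, ← RingHom.mapMatrix_apply, ← RingHom.map_det,
    hbridge, hbridge, ← map_mul] at hKg
  have hP : (Aq.submatrix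
        (⇑((insert i I).orderEmbOfFin (Finset.card_insert_of_notMem hi)))
        (⇑((insert j I).orderEmbOfFin (Finset.card_insert_of_notMem hj)))).det
      = pfr Aq (insert i (insert j I)) * pfr Aq I := hφinj hKg
  -- evaluate at 0
  set ψ : Polynomial ℝ →+* ℝ := Polynomial.evalRingHom 0 with hψ_def
  have hAqψ : Aq.map ⇑ψ = A := by
    ext p q
    simp [hAq_def, AX, hψ_def]
  have hfinal := congrArg ψ hP
  rw [map_mul, RingHom.map_det, RingHom.mapMatrix_apply,
    ← pfr_map ψ (A := Aq) (insert i (insert j I)).card _ le_rfl,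
    ← pfr_map ψ (A := Aq) I.card _ le_rfl, hAqψ,
    pfr_eq_pf (insert i (insert j I)).card _ le_rfl,
    pfr_eq_pf I.card _ le_rfl] at hfinal
  have hsubψ : (Aq.submatrix
        (⇑((insert i I).orderEmbOfFin (Finset.card_insert_of_notMem hi)))
        (⇑((insert j I).orderEmbOfFin (Finset.card_insert_of_notMem hj)))).map ⇑ψ
      = A.submatrix
        (⇑((insert i I).orderEmbOfFin (Finset.card_insert_of_notMem hi)))
        (⇑((insert j I).orderEmbOfFin (Finset.card_insert_of_notMem hj))) := by
    ext a b
    have : (Aq.map ⇑ψ) _ _ = A _ _ := congrFun (congrFun hAqψ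
      (((insert i I).orderEmbOfFin (Finset.card_insert_of_notMem hi)) a))
      (((insert j I).orderEmbOfFin (Finset.card_insert_of_notMem hj)) b)
    exact this
  rw [hsubψ] at hfinal
  exact hfinal


end PfAux

/-- For a real `n × n` skew-symmetric matrix `A`, all Pfaffians of even-sized
principal submatrices are positive iff all determinants of odd-sized top-right
almost-principal submatrices `A[I∪{i}, I∪{j}]` (with `i < j`, `i, j ∉ I`) are positive. -/
theorem pfaffian_pos_iff_almost_principal_pos {n : ℕ}
    (A : Matrix (Fin n) (Fin n) ℝ) (hA : A.transpose = -A) :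
    (∀ I : Finset (Fin n), Even I.card → 0 < pf A I) ↔
    (∀ (I : Finset (Fin n)) (i j : Fin n) (hi : i ∉ I) (hj : j ∉ I),
      i < j → Odd (I.card + 1) →
      0 < Matrix.det (A.submatrix
        ((insert i I).orderEmbOfFin (Finset.card_insert_of_notMem hi))
        ((insert j I).orderEmbOfFin (Finset.card_insert_of_notMem hj)))) := by
  have hA' : ∀ p q, A q p = -A p q := by
    intro p q
    have h := congrFun (congrFun hA p) q
    simpa using h
  constructor
  · intro hpos I i j hi hj hij hodd
    have hEven : Even I.card := Nat.not_odd_iff_even.mp (Nat.odd_add_one.mp hodd)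
    rw [PfAux.key_real hA' hi hj hij hEven]
    apply mul_pos
    · apply hpos
      have hiJI : i ∉ insert j I := by
        simp only [Finset.mem_insert]
        push_neg
        exact ⟨ne_of_lt hij, hi⟩
      rw [Finset.card_insert_of_notMem hiJI, Finset.card_insert_of_notMem hj]
      obtain ⟨c, hc⟩ := hEven
      exact ⟨c + 1, by omega⟩
    · exact hpos I hEven
  · intro hdet
    suffices h : ∀ (N : ℕ) (I : Finset (Fin n)), I.card ≤ N → Even I.card → 0 < pf A I by
      intro I hI
      exact h I.card I le_rfl hI
    intro N
    induction N with
    | zero =>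
        intro I h1 _
        have : I = ∅ := Finset.card_eq_zero.1 (by omega)
        subst this
        rw [PfAux.pf_empty]
        norm_num
    | succ N ih =>
        intro I h1 h2
        by_cases hne : I.Nonempty
        · have hc2 : 2 ≤ I.card := by
            obtain ⟨c, hc⟩ := h2
            have := Finset.card_pos.2 hne
            omega
          set i := I.min' hne with hi_def
          have hiI : i ∈ I := I.min'_mem hne
          have hne2 : (I.erase i).Nonempty := by
            rw [← Finset.card_pos, Finset.card_erase_of_mem hiI]
            omega
          set j := (I.erase i).min' hne2 with hj_def
          have hjI' : j ∈ I.erase i := Finset.min'_mem _ _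
          have hjI : j ∈ I := Finset.mem_of_mem_erase hjI'
          have hij : i < j := lt_of_le_of_ne (I.min'_le j hjI)
            (Ne.symm (Finset.ne_of_mem_erase hjI'))
          set J := (I.erase i).erase j with hJ_def
          have hiJ : i ∉ J := fun hh =>
            (Finset.ne_of_mem_erase (Finset.mem_of_mem_erase hh)) rfl
          have hjJ : j ∉ J := fun hh => (Finset.ne_of_mem_erase hh) rfl
          have hJcard : J.card = I.card - 2 := by
            rw [hJ_def, Finset.card_erase_of_mem hjI', Finset.card_erase_of_mem hiI]
            omega
          have hJeven : Even J.card := by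
            obtain ⟨c, hc⟩ := h2
            exact ⟨c - 1, by omega⟩
          have hIJ : insert i (insert j J) = I := by
            rw [hJ_def, Finset.insert_erase hjI', Finset.insert_erase hiI]
          have hkey := PfAux.key_real hA' hiJ hjJ hij hJeven
          rw [hIJ] at hkey
          have hdetpos := hdet J i j hiJ hjJ hij (Nat.odd_add_one.mpr (Nat.not_odd_iff_even.mpr hJeven))
          rw [hkey] at hdetpos
          have hJpos : 0 < pf A J := ih J (by omega) hJeven
          by_contra hcon
          push_neg at hcon
          nlinarith
        · rw [Finset.not_nonempty_iff_eq_empty.1 hne, PfAux.pf_empty]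
          norm_num
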